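/- Let f : ℕ → ℂ be such that ∑_{n≥0} |f_n| converges, and let z ∈ ℂ. Then ∑_{m≥0} f_m z^m / m! = (1/(2π)) ∫_{-π}^{π} F(e^{i x}) e^{z e^{-i x}} dx, where F(w) = ∑_{n≥0} f_n w^n. -/

import Mathlib

open MeasureTheory intervalIntegral

lemma int_exp_int (k : ℤ) :
    (∫ x in (-Real.pi)..Real.pi, Complex.exp (k * (Complex.I * x))) =
      if k = 0 then (2 * Real.pi : ℝ) else 0 := by
  rcases eq_or_ne k 0 with hk | hk
  · simp [hk, Complex.ofReal_mul]
    ring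
  · rw [if_neg hk]
    have hc : (k : ℂ) * Complex.I ≠ 0 := by
      simp [Complex.I_ne_zero, Int.cast_eq_zero, hk]
    have h1 : ∀ x : ℝ, (k : ℂ) * (Complex.I * x) = (k * Complex.I) * x := fun x => by ring
    simp_rw [h1]
    rw [integral_exp_mul_complex hc]
    have hinv : ((-1 : ℂ) ^ k)⁻¹ = (-1 : ℂ) ^ k := by
      rcases Int.even_or_odd k with hk2 | hk2
      · rw [hk2.neg_one_zpow]; norm_num
      · rw [Odd.neg_one_zpow hk2]; norm_num
    have e1 : Complex.exp ((k * Complex.I) * (Real.pi : ℂ)) = (-1 : ℂ) ^ k := by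
      rw [show ((k : ℂ) * Complex.I) * (Real.pi : ℂ) = k * (Real.pi * Complex.I) by ring,
        Complex.exp_int_mul, Complex.exp_pi_mul_I]
    have e2 : Complex.exp ((k * Complex.I) * (-(Real.pi : ℂ))) = (-1 : ℂ) ^ k := by
      rw [show ((k : ℂ) * Complex.I) * (-(Real.pi : ℂ)) = ((-k : ℤ) : ℂ) * (Real.pi * Complex.I) by
          push_cast; ring,
        Complex.exp_int_mul, Complex.exp_pi_mul_I, zpow_neg, hinv]
    rw [Complex.ofReal_neg, e1, e2, sub_self, zero_div, Complex.ofReal_zero]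

lemma norm_exp_int_mul_I_mul (k : ℤ) (x : ℝ) : ‖Complex.exp (k * (Complex.I * x))‖ = 1 := by
  simp [Complex.norm_exp, Complex.mul_re, Complex.mul_im]

lemma norm_exp_I_mul (x : ℝ) : ‖Complex.exp (Complex.I * x)‖ = 1 := by
  simp [Complex.norm_exp]

lemma norm_exp_neg_I_mul (x : ℝ) : ‖Complex.exp (-(Complex.I * x))‖ = 1 := by
  simp [Complex.norm_exp]

lemma coef_integral (z : ℂ) (n : ℕ) :
    (∫ x in (-Real.pi)..Real.pi,
        Complex.exp (Complex.I * x) ^ n * Complex.exp (z * Complex.exp (-(Complex.I * x)))) =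
      (2 * Real.pi : ℝ) * z ^ n / n.factorial := by
  set F : ℕ → ℝ → ℂ := fun m x =>
    z ^ m / m.factorial * Complex.exp (((n - m : ℤ) : ℂ) * (Complex.I * x)) with hF
  have key : HasSum (fun m => ∫ x in (-Real.pi)..Real.pi, F m x)
      (∫ x in (-Real.pi)..Real.pi,
        Complex.exp (Complex.I * x) ^ n * Complex.exp (z * Complex.exp (-(Complex.I * x)))) := by
    apply intervalIntegral.hasSum_integral_of_dominated_convergence
      (bound := fun m _ => ‖z‖ ^ m / m.factorial)
    · intro m
      apply Continuous.aestronglyMeasurable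
      fun_prop
    · intro m
      filter_upwards with x _
      rw [hF]
      simp only [norm_mul, norm_div]
      rw [norm_exp_int_mul_I_mul]
      simp
    · filter_upwards with x _
      exact Real.summable_pow_div_factorial ‖z‖
    · exact intervalIntegrable_const
    · filter_upwards with x _
      have h0 := NormedSpace.expSeries_div_hasSum_exp (z * Complex.exp (-(Complex.I * x)))
      rw [← Complex.exp_eq_exp_ℂ] at h0
      have h1 := h0.mul_left (Complex.exp (Complex.I * x) ^ n)
      convert h1 using 2 with m
      case e'_3 => rfl
      rw [hF]
      simp only
      rw [mul_pow, ← Complex.exp_nat_mul, ← Complex.exp_nat_mul]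
      rw [show (((n - m : ℤ) : ℂ)) * (Complex.I * x) =
        (n : ℂ) * (Complex.I * x) + (m : ℂ) * (-(Complex.I * x)) by push_cast; ring]
      rw [Complex.exp_add]
      ring
  have key2 : HasSum (fun m => ∫ x in (-Real.pi)..Real.pi, F m x)
      ((2 * Real.pi : ℝ) * z ^ n / n.factorial) := by
    have heq : ∀ m, (∫ x in (-Real.pi)..Real.pi, F m x) =
        if m = n then (2 * Real.pi : ℝ) * z ^ n / n.factorial else 0 := by
      intro m
      rw [hF]
      simp only
      rw [intervalIntegral.integral_const_mul, int_exp_int]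
      rcases eq_or_ne m n with h | h
      · rw [if_pos (by simp [h]), if_pos h, h]; ring
      · rw [if_neg (by simpa [sub_eq_zero] using fun hh => h hh.symm), if_neg h]; simp
    simp_rw [heq]
    exact hasSum_ite_eq n _
  exact key.unique key2

/-- If `∑ ‖f n‖` converges, then for every `z : ℂ`,
`∑_{m≥0} f_m z^m / m! = (1/(2π)) ∫_{-π}^{π} F(e^{ix}) e^{z e^{-ix}} dx`,
where `F(w) = ∑_{n≥0} f_n w^n`. -/
theorem egf_from_fourier (f : ℕ → ℂ) (hsum : Summable (fun n : ℕ => ‖f n‖)) (z : ℂ) :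
    ∑' m : ℕ, f m * z ^ m / m.factorial =
      ((2 * Real.pi : ℝ) : ℂ)⁻¹ *
        ∫ x in (-Real.pi)..Real.pi,
          (∑' n : ℕ, f n * Complex.exp (Complex.I * (x : ℂ)) ^ n) *
            Complex.exp (z * Complex.exp (-(Complex.I * (x : ℂ)))) := by
  set G : ℕ → ℝ → ℂ := fun n x =>
    f n * Complex.exp (Complex.I * x) ^ n * Complex.exp (z * Complex.exp (-(Complex.I * x)))
    with hG
  have key : HasSum (fun n => ∫ x in (-Real.pi)..Real.pi, G n x)
      (∫ x in (-Real.pi)..Real.pi,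
        (∑' n : ℕ, f n * Complex.exp (Complex.I * (x : ℂ)) ^ n) *
          Complex.exp (z * Complex.exp (-(Complex.I * (x : ℂ))))) := by
    apply intervalIntegral.hasSum_integral_of_dominated_convergence
      (bound := fun n _ => ‖f n‖ * Real.exp ‖z‖)
    · intro n
      apply Continuous.aestronglyMeasurable
      fun_prop
    · intro n
      filter_upwards with x _
      rw [hG]
      simp only [norm_mul, norm_pow, norm_exp_I_mul, one_pow, mul_one]
      refine mul_le_mul_of_nonneg_left ?_ (norm_nonneg _)
      calc ‖Complex.exp (z * Complex.exp (-(Complex.I * x)))‖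
          = Real.exp ((z * Complex.exp (-(Complex.I * x))).re) := Complex.norm_exp _
        _ ≤ Real.exp ‖z * Complex.exp (-(Complex.I * x))‖ :=
            Real.exp_le_exp.2 (Complex.re_le_norm _)
        _ = Real.exp ‖z‖ := by rw [norm_mul, norm_exp_neg_I_mul, mul_one]
    · filter_upwards with x _
      exact hsum.mul_right _
    · exact intervalIntegrable_const
    · filter_upwards with x _
      have hs : Summable (fun n : ℕ => f n * Complex.exp (Complex.I * x) ^ n) := by
        apply Summable.of_norm
        apply hsum.congr
        intro n
        rw [norm_mul, norm_pow, norm_exp_I_mul, one_pow, mul_one]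
      exact (hs.hasSum).mul_right (Complex.exp (z * Complex.exp (-(Complex.I * x))))
  have heq : ∀ n : ℕ, (∫ x in (-Real.pi)..Real.pi, G n x) =
      ((2 * Real.pi : ℝ) : ℂ) * (f n * z ^ n / n.factorial) := by
    intro n
    rw [hG]
    simp only [mul_assoc]
    rw [intervalIntegral.integral_const_mul, coef_integral]
    ring
  rw [funext heq] at key
  have hne : ((2 * Real.pi : ℝ) : ℂ) ≠ 0 := by
    simp [Real.pi_ne_zero]
  have key2 := key.mul_left (((2 * Real.pi : ℝ) : ℂ)⁻¹)
  simp only [← mul_assoc, inv_mul_cancel₀ hne, one_mul] at key2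
  exact key2.tsum_eq
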